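/- Let X be a proper metric space, Γ a group acting on X by isometries, properly discontinuously and cocompactly, σ : X → X a surjective isometry, and s an automorphism of Γ satisfying the equivariance relation σ(δ • x) = s(δ) • σ(x) for all δ ∈ Γ and x ∈ X. Then there exists ε > 0 such that for every γ ∈ Γ, if the map x ↦ γ • σ(x) has no fixed point in X, then d(x, γ • σ(x)) ≥ ε for all x ∈ X. -/
import Mathlib


open scoped Pointwise

/-- For a properly discontinuous, cocompact, isometric action of `Γ` on a proper metric
space `X`, a surjective isometry `σ : X → X`, and an automorphism `s` of `Γ` with
`σ(δ • x) = s(δ) • σ(x)`, there is a uniform `ε > 0` such that every `γ ∈ Γ` for which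
`x ↦ γ • σ(x)` has no fixed point displaces every point by at least `ε`. -/
theorem uniform_displacement_gap_nonelliptic
    {X : Type*} [MetricSpace X] [ProperSpace X] {Γ : Type*} [Group Γ] [MulAction Γ X]
    (hiso : ∀ γ : Γ, Isometry (fun x : X => γ • x))
    (σ : X → X) (hσiso : Isometry σ) (hσsurj : Function.Surjective σ)
    (s : Γ ≃* Γ) (hequiv : ∀ (δ : Γ) (x : X), σ (δ • x) = s δ • σ x)
    (hpd : ∀ K L : Set X, IsCompact K → IsCompact L →
      {γ : Γ | ((γ • K) ∩ L).Nonempty}.Finite)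
    (hcc : ∃ K : Set X, IsCompact K ∧ ∀ x : X, ∃ γ : Γ, x ∈ γ • K) :
    ∃ ε > (0 : ℝ), ∀ γ : Γ, (¬ ∃ x : X, γ • σ x = x) →
      ∀ x : X, ε ≤ dist x (γ • σ x) := by
  classical
  obtain ⟨K, hKc, hKcov⟩ := hcc
  rcases isEmpty_or_nonempty X with hX | hX
  · exact ⟨1, one_pos, fun γ _ x => (hX.false x).elim⟩
  obtain ⟨x0⟩ := hX
  have hKne : K.Nonempty := by
    obtain ⟨δ0, hδ0⟩ := hKcov x0
    obtain ⟨k, hk, -⟩ := hδ0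
    exact ⟨k, hk⟩
  set σK : Set X := σ '' K with hσK
  have hσKc : IsCompact σK := hKc.image hσiso.continuous
  set L : Set X := Metric.cthickening 1 K with hL
  have hLc : IsCompact L := hKc.cthickening
  have hF : {β : Γ | ((β • σK) ∩ L).Nonempty}.Finite := hpd σK L hσKc hLc
  set F' : Set Γ := {β : Γ | ((β • σK) ∩ L).Nonempty ∧ ¬ ∃ y : X, β • σ y = y} with hF'def
  have hF' : F'.Finite := hF.subset (fun β hβ => hβ.1)
  -- the main transfer lemma
  have main : ∀ γ : Γ, (¬ ∃ x : X, γ • σ x = x) → ∀ x : X, dist x (γ • σ x) ≤ 1 →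
      ∃ β ∈ F', ∃ k ∈ K, dist k (β • σ k) = dist x (γ • σ x) := by
    intro γ hγ x hle
    obtain ⟨δ, hδ⟩ := hKcov x
    rw [Set.mem_smul_set] at hδ
    obtain ⟨k, hk, hδk⟩ := hδ
    set β : Γ := δ⁻¹ * γ * s δ with hβdef
    have hβσ : ∀ y : X, β • σ y = δ⁻¹ • (γ • σ (δ • y)) := by
      intro y
      rw [hequiv]
      simp [hβdef, mul_smul]
    have hdist : dist k (β • σ k) = dist x (γ • σ x) := by
      rw [hβσ, ← hδk]
      calc dist k (δ⁻¹ • γ • σ (δ • k))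
          = dist (δ • k) (δ • δ⁻¹ • γ • σ (δ • k)) := ((hiso δ).dist_eq _ _).symm
        _ = dist (δ • k) (γ • σ (δ • k)) := by rw [smul_inv_smul]
    have hβne : ¬ ∃ y : X, β • σ y = y := by
      rintro ⟨y, hy⟩
      apply hγ
      refine ⟨δ • y, ?_⟩
      have := hβσ y
      rw [hy] at this
      have := congrArg (fun z => δ • z) this
      simpa using this.symm
    have hmem : β • σ k ∈ (β • σK) ∩ L := by
      constructor
      · exact Set.smul_mem_smul_set (Set.mem_image_of_mem σ hk)
      · refine Metric.mem_cthickening_of_dist_le (β • σ k) k 1 K hk ?_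
        rw [dist_comm, hdist]
        exact hle
    exact ⟨β, ⟨⟨β • σ k, hmem⟩, hβne⟩, k, hk, hdist⟩
  -- minimal displacement on K for each β in F'
  have key : ∀ β ∈ F', ∃ c > (0:ℝ), ∀ k ∈ K, c ≤ dist k (β • σ k) := by
    intro β hβ
    have hcont : Continuous fun x : X => dist x (β • σ x) :=
      continuous_id.dist (((hiso β).continuous).comp hσiso.continuous)
    obtain ⟨k₀, hk₀K, hmin⟩ := hKc.exists_isMinOn hKne hcont.continuousOn
    exact ⟨dist k₀ (β • σ k₀), dist_pos.mpr fun h => hβ.2 ⟨k₀, h.symm⟩,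
      fun k hk => hmin hk⟩
  choose! c hc0 hcK using key
  set T : Finset Γ := hF'.toFinset with hTdef
  by_cases hT : T.Nonempty
  · refine ⟨min 1 (T.inf' hT c), lt_min one_pos ?_, ?_⟩
    · rw [Finset.lt_inf'_iff]
      intro β hβ
      exact hc0 β (hF'.mem_toFinset.mp hβ)
    · intro γ hγ x
      rcases le_or_gt (dist x (γ • σ x)) 1 with hle | hgt
      · obtain ⟨β, hβF, k, hkK, hdk⟩ := main γ hγ x hle
        calc min 1 (T.inf' hT c) ≤ T.inf' hT c := min_le_right _ _
          _ ≤ c β := Finset.inf'_le _ (hF'.mem_toFinset.mpr hβF)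
          _ ≤ dist k (β • σ k) := hcK β hβF k hkK
          _ = dist x (γ • σ x) := hdk
      · exact le_trans (min_le_left _ _) hgt.le
  · refine ⟨1, one_pos, fun γ hγ x => ?_⟩
    by_contra hlt
    push_neg at hlt
    obtain ⟨β, hβF, -⟩ := main γ hγ x hlt.le
    exact hT ⟨β, hF'.mem_toFinset.mpr hβF⟩
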